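/- Euler's constant γ equals the sum of the Fontana–Mascheroni series: γ = Σ_{n=1}^∞ |G_n|/n. -/

import Mathlib

set_option maxHeartbeats 1000000

open Real Finset Filter MeasureTheory intervalIntegral Set Topology
noncomputable def FM.c : ℕ → ℝ
  | 0 => 0
  | n + 1 => 1/((n:ℝ)+2) - ∑ k ∈ (Finset.range n).attach, FM.c (k.1+1) / ((n:ℝ)+1-k.1)
decreasing_by exact Nat.succ_lt_succ (Finset.mem_range.mp k.2)
namespace FM
lemma c_succ (n : ℕ) :
    c (n+1) = 1/((n:ℝ)+2) - ∑ k ∈ Finset.range n, c (k+1) / ((n:ℝ)+1-k) := by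
  rw [c]; congr 1
  exact Finset.sum_attach (Finset.range n) (fun k => c (k+1) / ((n:ℝ)+1-k))

lemma sum_c (n : ℕ) : ∑ j ∈ Finset.range (n+1), c (j+1) / ((n:ℝ)+1-j) = 1/((n:ℝ)+2) := by
  rw [Finset.sum_range_succ, c_succ]
  have : ((n:ℝ)+1-n) = 1 := by ring
  rw [this]; ring

lemma c_pos : ∀ n : ℕ, 0 < c (n+1) := by
  intro n
  induction n using Nat.strong_induction_on with
  | _ n ih =>
    match n with
    | 0 => rw [c_succ]; norm_num
    | Nat.succ m =>
      rw [c_succ]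
      push_cast
      have key : ∑ k ∈ Finset.range (m+1), c (k+1) / ((m:ℝ)+1+1-k)
          < ∑ k ∈ Finset.range (m+1), ((m:ℝ)+2)/((m:ℝ)+3) * (c (k+1) / ((m:ℝ)+1-k)) := by
        apply Finset.sum_lt_sum_of_nonempty (Finset.nonempty_range_iff.mpr (Nat.succ_ne_zero m))
        intro k hk
        have hkm : k < m + 1 := Finset.mem_range.mp hk
        have hk' : (k:ℝ) ≤ m := by exact_mod_cast Nat.lt_succ_iff.mp hkm
        have hc := ih k hkm
        have h1 : (0:ℝ) < (m:ℝ)+1-k := by linarith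
        have h2 : (0:ℝ) < (m:ℝ)+1+1-k := by linarith
        have hk0 : (0:ℝ) ≤ (k:ℝ) := k.cast_nonneg
        have hlt : ((m:ℝ)+3)*((m:ℝ)+1-k) < ((m:ℝ)+2)*((m:ℝ)+1+1-k) := by nlinarith
        rw [div_mul_div_comm, div_lt_div_iff₀ h2 (by positivity)]
        calc c (k+1) * (((m:ℝ)+3)*((m:ℝ)+1-k))
            < c (k+1) * (((m:ℝ)+2)*((m:ℝ)+1+1-k)) := mul_lt_mul_of_pos_left hlt hc
          _ = ((m:ℝ)+2) * c (k+1) * ((m:ℝ)+1+1-k) := by ring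
      rw [← Finset.mul_sum, sum_c m] at key
      have h3 : ((m:ℝ)+2)/((m:ℝ)+3) * (1/((m:ℝ)+2)) = 1/((m:ℝ)+3) := by
        field_simp
      rw [h3] at key
      have h4 : (1:ℝ)/((m:ℝ)+1+2) = 1/((m:ℝ)+3) := by ring
      rw [h4]
      linarith

lemma c_le (n : ℕ) : c (n+1) ≤ 1/((n:ℝ)+2) := by
  rw [c_succ]
  have h0 : 0 ≤ ∑ k ∈ Finset.range n, c (k+1) / ((n:ℝ)+1-k) := by
    apply Finset.sum_nonneg
    intro k hk
    have : (k:ℝ) + 1 ≤ n := by exact_mod_cast Finset.mem_range.mp hk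
    exact div_nonneg (c_pos k).le (by linarith)
  linarith

lemma c_le_one (n : ℕ) : c (n+1) ≤ 1 := by
  have := c_le n
  have h : (1:ℝ)/((n:ℝ)+2) ≤ 1 := by
    rw [div_le_one (by positivity)]
    have : (0:ℝ) ≤ n := n.cast_nonneg
    linarith
  linarith

end FM
namespace FM
noncomputable def g : ℕ → ℝ
  | 0 => 1
  | n + 1 => (-1)^n * c (n+1)

lemma abs_g_le_one (n : ℕ) : |g n| ≤ 1 := by
  match n with
  | 0 => simp [g]
  | n+1 =>
    rw [g, abs_mul, abs_pow, abs_neg, abs_one, one_pow, one_mul,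
      abs_of_pos (c_pos n)]
    exact c_le_one n

lemma summable_norm_g (z : ℝ) (hz : |z| < 1) :
    Summable (fun n => ‖g n * z^n‖) := by
  apply Summable.of_nonneg_of_le (fun n => norm_nonneg _)
    (fun n => ?_) (summable_geometric_of_lt_one (abs_nonneg z) hz)
  rw [norm_mul, norm_pow]
  calc ‖g n‖ * ‖z‖^n ≤ 1 * ‖z‖^n := by
        apply mul_le_mul_of_nonneg_right (abs_g_le_one n) (by positivity)
    _ = |z|^n := by rw [one_mul]; rfl

lemma summable_g (z : ℝ) (hz : |z| < 1) : Summable (fun n => g n * z^n) :=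
  (summable_norm_g z hz).of_norm

/-- coefficient identity -/
lemma coeff_T (n : ℕ) :
    ∑ ij ∈ antidiagonal n, (-1:ℝ)^ij.1 * g ij.2 / ((ij.1:ℝ)+1)
      = if n = 0 then 1 else 0 := by
  match n with
  | 0 => simp [g]
  | Nat.succ n =>
    rw [Finset.Nat.sum_antidiagonal_eq_sum_range_succ
      (f := fun i j => (-1:ℝ)^i * g j / ((i:ℝ)+1))]
    rw [Finset.sum_range_succ]
    have hlast : (-1:ℝ)^(n+1) * g (n+1-(n+1)) / ((((n+1):ℕ):ℝ)+1)
        = (-1)^(n+1) / ((n:ℝ)+2) := by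
      simp [g]
      push_cast
      ring
    have hrest : ∑ k ∈ Finset.range (n+1), (-1:ℝ)^k * g (n+1-k) / ((k:ℝ)+1)
        = (-1)^n / ((n:ℝ)+2) := by
      have step : ∀ k ∈ Finset.range (n+1),
          (-1:ℝ)^k * g (n+1-k) / ((k:ℝ)+1) = (-1)^n * (c (n+1-k) / ((k:ℝ)+1)) := by
        intro k hk
        have hkn : k ≤ n := Nat.lt_succ_iff.mp (Finset.mem_range.mp hk)
        have h1 : n + 1 - k = (n - k) + 1 := by omega
        rw [h1, g]
        have h2 : (-1:ℝ)^k * (-1:ℝ)^(n-k) = (-1)^n := by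
          rw [← pow_add]
          congr 1
          omega
        field_simp
        ring_nf
        rw [mul_assoc, h2]
      rw [Finset.sum_congr rfl step, ← Finset.mul_sum]
      have refl : ∑ k ∈ Finset.range (n+1), c (n+1-k) / ((k:ℝ)+1)
          = ∑ j ∈ Finset.range (n+1), c (j+1) / ((n:ℝ)+1-j) := by
        rw [← Finset.sum_range_reflect (fun k => c (n+1-k) / ((k:ℝ)+1)) (n+1)]
        apply Finset.sum_congr rfl
        intro j hj
        have hjn : j ≤ n := Nat.lt_succ_iff.mp (Finset.mem_range.mp hj)
        have h2 : n + 1 - 1 - j = n - j := by omega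
        have h1 : n + 1 - (n - j) = j + 1 := by omega
        rw [h2, h1]
        congr 1
        have : ((n - j : ℕ):ℝ) = (n:ℝ) - j := by
          rw [Nat.cast_sub hjn]
        rw [this]
        ring
      have hcsum : ∑ k ∈ Finset.range (n+1), c (n+1-k) / ((k:ℝ)+1) = 1/((n:ℝ)+2) := by
        rw [refl, sum_c]
      rw [hcsum]
      ring
    rw [hrest, hlast]
    rw [pow_succ]
    simp
    ring
end FM
namespace FM
lemma log_mul_tsum_g (z : ℝ) (hz : |z| < 1) :
    Real.log (1+z) * ∑' n, g n * z^n = z := by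
  have hlog : HasSum (fun n : ℕ => -((-z)^(n+1)/((n:ℝ)+1))) (Real.log (1+z)) := by
    have h := (hasSum_pow_div_log_of_abs_lt_one (x := -z) (by rwa [abs_neg])).neg
    rw [sub_neg_eq_add, neg_neg] at h
    exact h
  have ha : Summable (fun n : ℕ => ‖-((-z)^(n+1)/((n:ℝ)+1))‖) := by
    apply Summable.of_nonneg_of_le (fun n => norm_nonneg _) (fun n => ?_)
      ((summable_geometric_of_lt_one (abs_nonneg z) hz).mul_left |z|)
    rw [norm_neg, norm_div, norm_pow, norm_neg]
    calc ‖z‖^(n+1) / ‖((n:ℝ)+1)‖ ≤ ‖z‖^(n+1) / 1 := by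
          apply div_le_div_of_nonneg_left (by positivity) one_pos ?_
          rw [Real.norm_eq_abs, abs_of_pos (by positivity)]
          exact le_add_of_nonneg_left n.cast_nonneg
      _ = |z| * |z|^n := by rw [div_one, pow_succ]; rw [Real.norm_eq_abs]; ring
  have hb := summable_norm_g z hz
  rw [← hlog.tsum_eq, tsum_mul_tsum_eq_tsum_sum_antidiagonal_of_summable_norm ha hb]
  have inner_eq : ∀ n : ℕ, ∑ ij ∈ antidiagonal n,
      (-((-z)^(ij.1+1)/((ij.1:ℝ)+1))) * (g ij.2 * z^ij.2)
      = z^(n+1) * (if n = 0 then 1 else 0) := by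
    intro n
    rw [← coeff_T n, Finset.mul_sum]
    apply Finset.sum_congr rfl
    intro ij hij
    have hsum : ij.1 + ij.2 = n := Finset.HasAntidiagonal.mem_antidiagonal.mp hij
    have hzpow : (-z)^(ij.1+1) = (-1)^(ij.1+1) * z^(ij.1+1) := by
      rw [neg_pow]
    rw [hzpow]
    have hzz : z^(ij.1+1) * z^ij.2 = z^(n+1) := by
      rw [← pow_add]
      congr 1
      omega
    field_simp
    rw [pow_succ]
    have hzz' : z^ij.1 * z^ij.2 = z^n := by rw [← pow_add, hsum]
    ring_nf
    linear_combination (g ij.2 * (-1:ℝ)^ij.1 * z) * hzz'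
  rw [tsum_congr inner_eq]
  rw [tsum_eq_single 0 (fun n hn => by rw [if_neg hn, mul_zero])]
  simp

lemma tsum_g_eq (z : ℝ) (hz : |z| < 1) (h0 : z ≠ 0) :
    ∑' n, g n * z^n = z / Real.log (1+z) := by
  have h1z : 0 < 1 + z := by
    cases abs_lt.mp hz; linarith
  have hlogne : Real.log (1+z) ≠ 0 := by
    intro h
    rcases (Real.log_eq_zero).mp h with h' | h' | h' <;> simp_all <;> linarith
  field_simp
  rw [mul_comm]
  exact log_mul_tsum_g z hz
end FM

namespace FM
lemma g_zero : g 0 = 1 := rfl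
lemma g_succ (n : ℕ) : g (n+1) = (-1)^n * c (n+1) := rfl

lemma hasSum_f (t : ℝ) (ht : t ∈ Set.Ioo (0:ℝ) 1) :
    HasSum (fun n => c (n+1) * t^n) (1/t + 1/Real.log (1-t)) := by
  obtain ⟨ht0, ht1⟩ := ht
  have habs : |(-t)| < 1 := by rw [abs_neg, abs_of_pos ht0]; exact ht1
  have hne : (-t) ≠ 0 := neg_ne_zero.mpr ht0.ne'
  have hL : Real.log (1-t) < 0 := Real.log_neg (by linarith) (by linarith)
  have h1 : ∑' n, g n * (-t)^n = (-t)/Real.log (1-t) := by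
    have h := tsum_g_eq (-t) habs hne
    rw [show (1 + -t : ℝ) = 1 - t by ring] at h
    exact h
  have hsummable := summable_g (-t) habs
  have hterm : ∀ n, g (n+1) * (-t)^(n+1) = -(c (n+1) * t^(n+1)) := by
    intro n
    have hpow : (-1:ℝ)^n * (-1:ℝ)^(n+1) = -1 := by
      rw [← pow_add]
      exact Odd.neg_one_pow ⟨n, by ring⟩
    have hneg : ((-t):ℝ)^(n+1) = (-1)^(n+1) * t^(n+1) := by rw [neg_pow]
    calc g (n+1) * (-t)^(n+1) = ((-1:ℝ)^n * c (n+1)) * ((-1)^(n+1) * t^(n+1)) := by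
          rw [g_succ, hneg]
      _ = ((-1:ℝ)^n * (-1:ℝ)^(n+1)) * (c (n+1) * t^(n+1)) := by ring
      _ = -(c (n+1) * t^(n+1)) := by rw [hpow]; ring
  have hs_shift : Summable (fun n => c (n+1) * t^(n+1)) := by
    have h2 := ((summable_nat_add_iff 1).mpr hsummable).neg
    exact h2.congr (fun n => by rw [hterm n, neg_neg])
  have h3 : ∑' n, c (n+1) * t^(n+1) = 1 + t/Real.log (1-t) := by
    have h4 : ∑' n, g (n+1) * (-t)^(n+1) = - ∑' n, c (n+1) * t^(n+1) := by
      rw [← tsum_neg]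
      exact tsum_congr (fun n => hterm n)
    have h5 := h1
    rw [Summable.tsum_eq_zero_add hsummable, g_zero] at h5
    simp only [pow_zero, mul_one] at h5
    rw [h4] at h5
    have h6 : (-t)/Real.log (1-t) = -(t/Real.log (1-t)) := by ring
    rw [h6] at h5
    linarith
  have h6 : HasSum (fun n => c (n+1) * t^(n+1)) (1 + t/Real.log (1-t)) := h3 ▸ hs_shift.hasSum
  have h7 := h6.div_const t
  have h8 : (fun n => c (n+1) * t^(n+1) / t) = fun n => c (n+1) * t^n := by
    funext n
    rw [pow_succ, ← mul_assoc, mul_div_assoc, div_self ht0.ne', mul_one]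
  have h9 : (1 + t/Real.log (1-t))/t = 1/t + 1/Real.log (1-t) := by
    field_simp
  rw [h8, h9] at h7
  exact h7
end FM

namespace FM
lemma log_one_add_lt {z : ℝ} (hz : -1 < z) (h0 : z ≠ 0) : Real.log (1+z) < z := by
  have h1 : z + 1 < Real.exp z := Real.add_one_lt_exp h0
  calc Real.log (1+z) < Real.log (Real.exp z) := Real.log_lt_log (by linarith) (by linarith)
    _ = z := Real.log_exp z

lemma log_one_add_ne {z : ℝ} (hz : -1 < z) (h0 : z ≠ 0) : Real.log (1+z) ≠ 0 := by
  intro h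
  rcases Real.log_eq_zero.mp h with h' | h' | h' <;> [linarith; exact h0 (by linarith); linarith]

theorem G_eq_g (G : ℕ → ℝ)
    (hG : ∀ z : ℝ, |z| < 1 → z ≠ 0 →
      z / Real.log (1 + z) = 1 + ∑' n : ℕ, G (n + 1) * z ^ (n + 1)) :
    ∀ n, G (n+1) = g (n+1) := by
  set e : ℕ → ℝ := fun n => if n = 0 then 0 else G n - g n with he
  have hzlt : ∀ z : ℝ, |z| < 1 → -1 < z := fun z hz => (abs_lt.mp hz).1
  have hsumG : ∀ z : ℝ, |z| < 1 → z ≠ 0 → Summable (fun n => G (n+1) * z^(n+1)) := by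
    intro z hz h0
    by_contra h
    have := hG z hz h0
    rw [tsum_eq_zero_of_not_summable h, add_zero, div_eq_one_iff_eq
      (log_one_add_ne (hzlt z hz) h0)] at this
    exact absurd this.symm (ne_of_lt (log_one_add_lt (hzlt z hz) h0))
  have hsumg : ∀ z : ℝ, |z| < 1 → Summable (fun n => g (n+1) * z^(n+1)) := by
    intro z hz
    exact (summable_nat_add_iff 1).mpr (summable_g z hz)
  have htsum_shift : ∀ z : ℝ, |z| < 1 → z ≠ 0 →
      ∑' n, g (n+1) * z^(n+1) = z / Real.log (1+z) - 1 := by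
    intro z hz h0
    have h1 := tsum_g_eq z hz h0
    rw [Summable.tsum_eq_zero_add (summable_g z hz), g_zero] at h1
    simp only [pow_zero, mul_one] at h1
    linarith
  have he_tsum : ∀ z : ℝ, |z| < 1 → ∑' n, e n * z^n = 0 := by
    intro z hz
    rcases eq_or_ne z 0 with rfl | h0
    · have : (fun n => e n * (0:ℝ)^n) = fun _ => 0 := by
        funext n
        match n with
        | 0 => simp [he]
        | n+1 => rw [zero_pow (Nat.succ_ne_zero n), mul_zero]
      rw [this, tsum_zero]
    · have hsub : Summable (fun n => e (n+1) * z^(n+1)) := by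
        refine ((hsumG z hz h0).sub (hsumg z hz)).congr (fun n => ?_)
        simp only [he]
        rw [if_neg (Nat.succ_ne_zero n), sub_mul]
      have hfull : Summable (fun n => e n * z^n) := (summable_nat_add_iff 1).mp hsub
      rw [Summable.tsum_eq_zero_add hfull]
      have h2 : ∑' n, e (n+1) * z^(n+1) = 0 := by
        have hts : ∑' n, e (n+1) * z^(n+1)
            = (∑' n, G (n+1) * z^(n+1)) - ∑' n, g (n+1) * z^(n+1) := by
          rw [← Summable.tsum_sub (hsumG z hz h0) (hsumg z hz)]
          apply tsum_congr
          intro n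
          simp only [he]
          rw [if_neg (Nat.succ_ne_zero n), sub_mul]
        rw [hts, htsum_shift z hz h0]
        have := hG z hz h0
        linarith
      simp only [he]
      rw [h2]
      simp
  -- now build formal multilinear series
  set p : FormalMultilinearSeries ℝ ℝ ℝ :=
    fun n => ContinuousMultilinearMap.mkPiRing ℝ (Fin n) (e n) with hp
  have hpsum : ∀ z : ℝ, |z| < 1 → p.sum z = 0 := by
    intro z hz
    have : p.sum z = ∑' n, e n * z^n := by
      apply tsum_congr
      intro n
      simp [hp, ContinuousMultilinearMap.mkPiRing_apply, mul_comm]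
    rw [this, he_tsum z hz]
  -- bound on coefficients
  have hsum34 : Summable (fun n => e n * (3/4:ℝ)^n) := by
    have h34 : |(3/4 : ℝ)| < 1 := by rw [abs_of_pos] <;> norm_num
    have hsub : Summable (fun n => e (n+1) * (3/4:ℝ)^(n+1)) := by
      refine ((hsumG (3/4) h34 (by norm_num)).sub (hsumg (3/4) h34)).congr (fun n => ?_)
      simp only [he]
      rw [if_neg (Nat.succ_ne_zero n), sub_mul]
    exact (summable_nat_add_iff 1).mp hsub
  obtain ⟨C, hC⟩ := (hsum34.tendsto_atTop_zero.abs).bddAbove_range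
  have hrad : (0:ENNReal) < p.radius := by
    have hb : ∀ n : ℕ, ‖p n‖ * ((3/4 : NNReal):ℝ)^n ≤ C := by
      intro n
      have h1 : ‖p n‖ = |e n| := by
        rw [hp]
        exact ContinuousMultilinearMap.norm_mkPiRing (e n)
      have h2 : ((3/4 : NNReal):ℝ) = (3/4 : ℝ) := by norm_num
      rw [h1, h2]
      have := hC (Set.mem_range_self n)
      rw [abs_mul, abs_pow, abs_of_pos (by norm_num : (0:ℝ) < 3/4)] at this
      exact this
    have := p.le_radius_of_bound C hb
    refine lt_of_lt_of_le ?_ this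
    simp only [ENNReal.coe_pos]
    norm_num
  have hFP : HasFPowerSeriesAt p.sum p 0 :=
    (p.hasFPowerSeriesOnBall hrad).hasFPowerSeriesAt
  have hev : p.sum =ᶠ[nhds (0:ℝ)] 0 := by
    filter_upwards [Metric.ball_mem_nhds (0:ℝ) one_pos] with z hz
    rw [Metric.mem_ball, Real.dist_eq, sub_zero] at hz
    exact hpsum z hz
  have hp0 : p = 0 := (hFP.congr hev).eq_zero
  intro n
  have : e (n+1) = 0 := by
    have h1 : p (n+1) = 0 := by rw [hp0]; rfl
    have h2 := congrFun (congrArg DFunLike.coe h1) (fun _ => (1:ℝ))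
    rw [hp] at h2
    simpa [ContinuousMultilinearMap.mkPiRing_apply] using h2
  simpa [he, sub_eq_zero] using this
end FM
namespace FM
noncomputable def f : ℝ → ℝ := fun t => 1/t + 1/Real.log (1-t)

lemma f_meas : Measurable f := by
  unfold f
  apply Measurable.add
  · exact measurable_const.div measurable_id
  · exact measurable_const.div (Real.measurable_log.comp (measurable_const.sub measurable_id))

lemma f_nonneg {t : ℝ} (ht : t ∈ Set.Ioo (0:ℝ) 1) : 0 ≤ f t := by
  obtain ⟨ht0, ht1⟩ := ht
  have h0 : 0 ≤ c 1 * t ^ 0 := le_of_lt (by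
    have := c_pos 0
    simpa using mul_pos this (by norm_num : (0:ℝ) < 1))
  have := (hasSum_f t ⟨ht0, ht1⟩).nonneg (fun n => ?_)
  · exact this
  · exact mul_nonneg (c_pos n).le (pow_nonneg ht0.le n)

-- integral of each power term
lemma integral_term (n : ℕ) :
    ∫ t in Set.Ioo (0:ℝ) 1, c (n+1) * t^n = c (n+1) / ((n:ℝ)+1) := by
  rw [← MeasureTheory.integral_Ioc_eq_integral_Ioo,
    ← intervalIntegral.integral_of_le zero_le_one,
    intervalIntegral.integral_const_mul, integral_pow]
  norm_num
  ring
end FM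
namespace FM
lemma integrable_term (n : ℕ) :
    IntegrableOn (fun t => c (n+1) * t^n) (Set.Ioo (0:ℝ) 1) := by
  apply (Continuous.integrableOn_Icc (by continuity)).mono_set Set.Ioo_subset_Icc_self

lemma lintegral_term (n : ℕ) :
    ∫⁻ t in Set.Ioo (0:ℝ) 1, ENNReal.ofReal (c (n+1) * t^n)
      = ENNReal.ofReal (c (n+1) / ((n:ℝ)+1)) := by
  rw [← MeasureTheory.ofReal_integral_eq_lintegral_ofReal (integrable_term n)]
  · rw [integral_term]
  · rw [Filter.EventuallyLE, ae_restrict_iff' measurableSet_Ioo]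
    filter_upwards with t ht
    exact mul_nonneg (c_pos n).le (pow_nonneg ht.1.le n)

lemma summable_c_div : Summable (fun n => c (n+1) / ((n:ℝ)+1)) := by
  have hbase : Summable (fun n : ℕ => 1/((n:ℝ)+1)^2) := by
    have h1 : Summable (fun n : ℕ => 1/(n:ℝ)^2) := by
      rw [Real.summable_one_div_nat_pow]
      norm_num
    have h2 := (summable_nat_add_iff 1).mpr h1
    exact h2.congr (fun n => by push_cast; ring)
  apply Summable.of_nonneg_of_le (fun n => ?_) (fun n => ?_) hbase
  · exact div_nonneg (c_pos n).le (by positivity)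
  · have h1 : c (n+1) ≤ 1/((n:ℝ)+1) := by
      have := c_le n
      have h2 : (1:ℝ)/((n:ℝ)+2) ≤ 1/((n:ℝ)+1) := by
        apply div_le_div_of_nonneg_left one_pos.le (by positivity) (by linarith)
      linarith
    rw [div_le_div_iff₀ (by positivity) (by positivity)]
    calc c (n+1) * ((n:ℝ)+1)^2 = (c (n+1) * ((n:ℝ)+1)) * ((n:ℝ)+1) := by ring
      _ ≤ (1/((n:ℝ)+1) * ((n:ℝ)+1)) * ((n:ℝ)+1) := by
          apply mul_le_mul_of_nonneg_right (mul_le_mul_of_nonneg_right h1 (by positivity)) (by positivity)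
      _ = 1 * ((n:ℝ)+1) := by
          field_simp
end FM
namespace FM
lemma ae_f_eq : ∀ᵐ t ∂(volume.restrict (Set.Ioo (0:ℝ) 1)),
    f t = ∑' n, c (n+1) * t^n := by
  rw [ae_restrict_iff' measurableSet_Ioo]
  filter_upwards with t ht
  exact ((hasSum_f t ht).tsum_eq).symm

lemma lint_f : ∫⁻ t in Set.Ioo (0:ℝ) 1, ENNReal.ofReal (f t)
    = ∑' n, ENNReal.ofReal (c (n+1) / ((n:ℝ)+1)) := by
  have h1 : ∫⁻ t in Set.Ioo (0:ℝ) 1, ENNReal.ofReal (f t)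
      = ∫⁻ t in Set.Ioo (0:ℝ) 1, ∑' n, ENNReal.ofReal (c (n+1) * t^n) := by
    apply lintegral_congr_ae
    filter_upwards [ae_f_eq, ae_restrict_mem measurableSet_Ioo] with t hft ht
    rw [hft]
    rw [ENNReal.ofReal_tsum_of_nonneg (fun n => mul_nonneg (c_pos n).le (pow_nonneg ht.1.le n))]
    exact ((hasSum_f t ht).summable).congr (fun n => rfl)
  rw [h1, lintegral_tsum (fun n => by measurability)]
  exact tsum_congr (fun n => lintegral_term n)

lemma lint_f_ne_top : ∫⁻ t in Set.Ioo (0:ℝ) 1, ENNReal.ofReal (f t) ≠ ⊤ := by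
  rw [lint_f, ← ENNReal.ofReal_tsum_of_nonneg
    (fun n => div_nonneg (c_pos n).le (by positivity)) summable_c_div]
  exact ENNReal.ofReal_ne_top

lemma integrable_f : IntegrableOn f (Set.Ioo (0:ℝ) 1) := by
  refine ⟨f_meas.aestronglyMeasurable, ?_⟩
  rw [hasFiniteIntegral_iff_norm]
  have : ∫⁻ t in Set.Ioo (0:ℝ) 1, ENNReal.ofReal ‖f t‖
      = ∫⁻ t in Set.Ioo (0:ℝ) 1, ENNReal.ofReal (f t) := by
    apply lintegral_congr_ae
    filter_upwards [ae_restrict_mem measurableSet_Ioo] with t ht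
    rw [Real.norm_eq_abs, abs_of_nonneg (f_nonneg ht)]
  rw [this]
  exact lt_top_iff_ne_top.mpr lint_f_ne_top

lemma integral_f : ∫ t in Set.Ioo (0:ℝ) 1, f t = ∑' n, c (n+1) / ((n:ℝ)+1) := by
  have hnn : 0 ≤ᵐ[volume.restrict (Set.Ioo (0:ℝ) 1)] f := by
    rw [Filter.EventuallyLE, ae_restrict_iff' measurableSet_Ioo]
    filter_upwards with t ht
    exact f_nonneg ht
  rw [MeasureTheory.integral_eq_lintegral_of_nonneg_ae hnn f_meas.aestronglyMeasurable, lint_f,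
    ← ENNReal.ofReal_tsum_of_nonneg (fun n => div_nonneg (c_pos n).le (by positivity)) summable_c_div,
    ENNReal.toReal_ofReal]
  exact tsum_nonneg (fun n => div_nonneg (c_pos n).le (by positivity))
end FM
namespace FM
lemma integral_one_sub_pow (k : ℕ) :
    ∫ t in Set.Ioo (0:ℝ) 1, (1-t)^k = 1/((k:ℝ)+1) := by
  rw [← MeasureTheory.integral_Ioc_eq_integral_Ioo,
    ← intervalIntegral.integral_of_le zero_le_one]
  have h := intervalIntegral.integral_comp_sub_left (a := (0:ℝ)) (b := 1) (fun y => y^k) 1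
  simp only [sub_zero, sub_self] at h
  rw [h, integral_pow]
  norm_num

lemma integrable_one_sub_pow (k : ℕ) :
    IntegrableOn (fun t : ℝ => (1-t)^k) (Set.Ioo (0:ℝ) 1) :=
  (Continuous.integrableOn_Icc (by continuity)).mono_set Set.Ioo_subset_Icc_self

lemma integral_geom (N : ℕ) :
    ∫ t in Set.Ioo (0:ℝ) 1, (1-(1-t)^N)/t = (harmonic N : ℝ) := by
  have hEq : Set.EqOn (fun t : ℝ => (1-(1-t)^N)/t)
      (fun t : ℝ => ∑ k ∈ Finset.range N, (1-t)^k) (Set.Ioo (0:ℝ) 1) := by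
    intro t ht
    have ht0 : t ≠ 0 := ht.1.ne'
    have hx : (1-t) ≠ 1 := by
      intro h; apply ht0; linarith
    simp only
    rw [geom_sum_eq hx N]
    rw [div_eq_div_iff ht0 (by simpa using sub_ne_zero.mpr hx)]
    ring
  rw [MeasureTheory.setIntegral_congr_fun measurableSet_Ioo hEq,
    MeasureTheory.integral_finset_sum _ (fun k _ => integrable_one_sub_pow k)]
  rw [Finset.sum_congr rfl (fun k _ => integral_one_sub_pow k)]
  rw [harmonic]
  push_cast
  apply Finset.sum_congr rfl
  intro k _
  rw [one_div]
end FM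
namespace FM
lemma b1_integrable {t : ℝ} (ht : t ∈ Set.Ioo (0:ℝ) 1) (N : ℕ) :
    IntegrableOn (fun s : ℝ => (1-t) ^ s) (Set.Ioo (0:ℝ) (N:ℝ)) := by
  have hb : (0:ℝ) < 1 - t := by have := ht.2; simp only [Set.mem_Ioo] at ht; linarith
  have hc : Continuous (fun s : ℝ => (1-t) ^ s) := by
    have : (fun s : ℝ => (1-t) ^ s) = fun s => Real.exp (Real.log (1-t) * s) := by
      funext s
      exact Real.rpow_def_of_pos hb s
    rw [this]
    exact Real.continuous_exp.comp (continuous_const.mul continuous_id)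
  exact (hc.integrableOn_Icc).mono_set Set.Ioo_subset_Icc_self

lemma b1 {t : ℝ} (ht : t ∈ Set.Ioo (0:ℝ) 1) (N : ℕ) :
    ∫ s in Set.Ioo (0:ℝ) (N:ℝ), (1-t) ^ s
      = (1-(1-t)^N) * (-1/Real.log (1-t)) := by
  obtain ⟨ht0, ht1⟩ := ht
  have hb : (0:ℝ) < 1 - t := by linarith
  have hb1 : 1 - t < 1 := by linarith
  have hlb : Real.log (1-t) < 0 := Real.log_neg hb hb1
  rw [← MeasureTheory.integral_Ioc_eq_integral_Ioo,
    ← intervalIntegral.integral_of_le (by positivity : (0:ℝ) ≤ (N:ℝ))]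
  have hrw : ∀ s : ℝ, (1-t) ^ s = Real.exp (Real.log (1-t) * s) :=
    fun s => Real.rpow_def_of_pos hb s
  rw [intervalIntegral.integral_congr (g := fun s => Real.exp (Real.log (1-t) * s))
    (fun s _ => hrw s)]
  rw [intervalIntegral.integral_comp_mul_left Real.exp hlb.ne]
  rw [integral_exp]
  rw [mul_zero, Real.exp_zero]
  have hN : Real.exp (Real.log (1-t) * N) = (1-t)^N := by
    rw [← hrw (N:ℝ), Real.rpow_natCast]
  rw [hN]
  rw [smul_eq_mul]
  field_simp
  ring

lemma b2_integrable {s : ℝ} (hs : 0 ≤ s) :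
    IntegrableOn (fun t : ℝ => (1-t) ^ s) (Set.Ioo (0:ℝ) 1) := by
  have hc : ContinuousOn (fun t : ℝ => (1-t) ^ s) (Set.Icc (0:ℝ) 1) := by
    apply ContinuousOn.rpow_const (by fun_prop)
    intro x _
    exact Or.inr hs
  exact (hc.integrableOn_Icc).mono_set Set.Ioo_subset_Icc_self

lemma b2 {s : ℝ} (hs : 0 < s) :
    ∫ t in Set.Ioo (0:ℝ) 1, (1-t) ^ s = 1/(s+1) := by
  rw [← MeasureTheory.integral_Ioc_eq_integral_Ioo,
    ← intervalIntegral.integral_of_le zero_le_one]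
  have h := intervalIntegral.integral_comp_sub_left (a := (0:ℝ)) (b := 1)
    (fun y => y ^ s) 1
  simp only [sub_zero, sub_self] at h
  rw [h, integral_rpow (Or.inl (by linarith))]
  rw [Real.one_rpow, Real.zero_rpow (by linarith)]
  norm_num

lemma b3_integrable (N : ℕ) :
    IntegrableOn (fun s : ℝ => 1/(s+1)) (Set.Ioo (0:ℝ) (N:ℝ)) := by
  have hc : ContinuousOn (fun s : ℝ => 1/(s+1)) (Set.Icc (0:ℝ) (N:ℝ)) := by
    apply ContinuousOn.div continuousOn_const (by fun_prop)
    intro x hx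
    have := hx.1
    intro h
    linarith
  exact (hc.integrableOn_Icc).mono_set Set.Ioo_subset_Icc_self

lemma b3 (N : ℕ) :
    ∫ s in Set.Ioo (0:ℝ) (N:ℝ), 1/(s+1) = Real.log ((N:ℝ)+1) := by
  rw [← MeasureTheory.integral_Ioc_eq_integral_Ioo,
    ← intervalIntegral.integral_of_le (by positivity : (0:ℝ) ≤ (N:ℝ))]
  have h := intervalIntegral.integral_comp_add_right (a := (0:ℝ)) (b := (N:ℝ))
    (fun y => 1/y) 1
  rw [h, integral_one_div]
  · rw [zero_add, div_one]
  · intro hmem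
    rw [Set.mem_uIcc] at hmem
    rcases hmem with ⟨h1, _⟩ | ⟨_, h2⟩
    · linarith
    · have : (0:ℝ) ≤ N := by positivity
      linarith
end FM
namespace FM
lemma loginv_nonneg {t : ℝ} (ht : t ∈ Set.Ioo (0:ℝ) 1) (N : ℕ) :
    0 ≤ (1-(1-t)^N) * (-1/Real.log (1-t)) := by
  obtain ⟨ht0, ht1⟩ := ht
  have hb : (0:ℝ) < 1 - t := by linarith
  have hb1 : 1 - t < 1 := by linarith
  have hlb : Real.log (1-t) < 0 := Real.log_neg hb hb1
  apply mul_nonneg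
  · have := pow_le_one₀ hb.le hb1.le (n := N)
    linarith
  · have h2 : (0:ℝ) ≤ 1/(-Real.log (1-t)) := le_of_lt (div_pos one_pos (by linarith))
    have h3 : -1/Real.log (1-t) = 1/(-Real.log (1-t)) := by ring
    rw [h3]
    exact h2

lemma loginv_meas (N : ℕ) :
    Measurable (fun t : ℝ => (1-(1-t)^N) * (-1/Real.log (1-t))) := by
  apply Measurable.mul
  · exact (measurable_const.sub ((measurable_const.sub measurable_id).pow_const N))
  · exact measurable_const.div (Real.measurable_log.comp (measurable_const.sub measurable_id))

lemma lint_loginv (N : ℕ) :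
    ∫⁻ t in Set.Ioo (0:ℝ) 1, ENNReal.ofReal ((1-(1-t)^N) * (-1/Real.log (1-t)))
      = ENNReal.ofReal (Real.log ((N:ℝ)+1)) := by
  have step1 : ∫⁻ t in Set.Ioo (0:ℝ) 1, ENNReal.ofReal ((1-(1-t)^N) * (-1/Real.log (1-t)))
      = ∫⁻ t in Set.Ioo (0:ℝ) 1, ∫⁻ s in Set.Ioo (0:ℝ) (N:ℝ),
          ENNReal.ofReal ((1-t) ^ s) := by
    apply lintegral_congr_ae
    filter_upwards [ae_restrict_mem measurableSet_Ioo] with t ht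
    have hb : (0:ℝ) < 1 - t := by have := ht.2; have := ht.1; simp only [Set.mem_Ioo] at ht; linarith
    rw [← b1 ht N, MeasureTheory.ofReal_integral_eq_lintegral_ofReal (b1_integrable ht N)]
    filter_upwards with s
    exact Real.rpow_nonneg hb.le s
  rw [step1]
  have hmeas : AEMeasurable (fun p : ℝ × ℝ => ENNReal.ofReal ((1 - p.1) ^ p.2))
      ((volume.restrict (Set.Ioo (0:ℝ) 1)).prod (volume.restrict (Set.Ioo (0:ℝ) (N:ℝ)))) := by
    apply Measurable.aemeasurable
    measurability
  rw [MeasureTheory.lintegral_lintegral_swap hmeas]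
  have step3 : ∫⁻ s in Set.Ioo (0:ℝ) (N:ℝ), ∫⁻ t in Set.Ioo (0:ℝ) 1,
      ENNReal.ofReal ((1-t) ^ s)
      = ∫⁻ s in Set.Ioo (0:ℝ) (N:ℝ), ENNReal.ofReal (1/(s+1)) := by
    apply lintegral_congr_ae
    filter_upwards [ae_restrict_mem measurableSet_Ioo] with s hs
    rw [← MeasureTheory.ofReal_integral_eq_lintegral_ofReal (b2_integrable hs.1.le)]
    · rw [b2 hs.1]
    · rw [Filter.EventuallyLE, ae_restrict_iff' measurableSet_Ioo]
      filter_upwards with t ht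
      exact Real.rpow_nonneg (by have := ht.2; simp only [Set.mem_Ioo] at ht; linarith) s
  rw [step3]
  rw [← MeasureTheory.ofReal_integral_eq_lintegral_ofReal (b3_integrable N)]
  · rw [b3]
  · rw [Filter.EventuallyLE, ae_restrict_iff' measurableSet_Ioo]
    filter_upwards with s hs
    exact le_of_lt (div_pos one_pos (by have := hs.1; linarith))
end FM
namespace FM
lemma integrable_loginv (N : ℕ) :
    IntegrableOn (fun t : ℝ => (1-(1-t)^N) * (-1/Real.log (1-t))) (Set.Ioo (0:ℝ) 1) := by
  refine ⟨(loginv_meas N).aestronglyMeasurable, ?_⟩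
  rw [hasFiniteIntegral_iff_norm]
  have : ∫⁻ t in Set.Ioo (0:ℝ) 1, ENNReal.ofReal ‖(1-(1-t)^N) * (-1/Real.log (1-t))‖
      = ∫⁻ t in Set.Ioo (0:ℝ) 1, ENNReal.ofReal ((1-(1-t)^N) * (-1/Real.log (1-t))) := by
    apply lintegral_congr_ae
    filter_upwards [ae_restrict_mem measurableSet_Ioo] with t ht
    rw [Real.norm_eq_abs, abs_of_nonneg (loginv_nonneg ht N)]
  rw [this, lint_loginv]
  exact ENNReal.ofReal_lt_top

lemma integral_loginv (N : ℕ) :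
    ∫ t in Set.Ioo (0:ℝ) 1, (1-(1-t)^N) * (-1/Real.log (1-t)) = Real.log ((N:ℝ)+1) := by
  have hnn : 0 ≤ᵐ[volume.restrict (Set.Ioo (0:ℝ) 1)]
      (fun t : ℝ => (1-(1-t)^N) * (-1/Real.log (1-t))) := by
    rw [Filter.EventuallyLE, ae_restrict_iff' measurableSet_Ioo]
    filter_upwards with t ht
    exact loginv_nonneg ht N
  rw [MeasureTheory.integral_eq_lintegral_of_nonneg_ae hnn
    (loginv_meas N).aestronglyMeasurable, lint_loginv, ENNReal.toReal_ofReal]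
  have h0 : (0:ℝ) ≤ N := by positivity
  exact Real.log_nonneg (by linarith)

lemma integrable_geom (N : ℕ) :
    IntegrableOn (fun t : ℝ => (1-(1-t)^N)/t) (Set.Ioo (0:ℝ) 1) := by
  apply MeasureTheory.IntegrableOn.congr_fun
    (f := fun t : ℝ => ∑ k ∈ Finset.range N, (1-t)^k)
  · exact MeasureTheory.integrable_finset_sum _ (fun k _ => integrable_one_sub_pow k)
  · intro t ht
    have ht0 : t ≠ 0 := ht.1.ne'
    have hx : (1-t) ≠ 1 := by intro h; apply ht0; linarith
    simp only
    rw [geom_sum_eq hx N, eq_comm, div_eq_div_iff ht0 (by simpa using sub_ne_zero.mpr hx)]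
    ring
  · exact measurableSet_Ioo

lemma Hlog (N : ℕ) : (harmonic N : ℝ) - Real.log ((N:ℝ)+1)
    = ∫ t in Set.Ioo (0:ℝ) 1, (1-(1-t)^N) * f t := by
  rw [← integral_geom N, ← integral_loginv N,
    ← MeasureTheory.integral_sub (integrable_geom N) (integrable_loginv N)]
  apply MeasureTheory.setIntegral_congr_fun measurableSet_Ioo
  intro t ht
  have ht0 : t ≠ 0 := ht.1.ne'
  have hL : Real.log (1-t) ≠ 0 :=
    (Real.log_neg (by have := ht.2; simp only [Set.mem_Ioo] at ht; linarith)
      (by have := ht.1; simp only [Set.mem_Ioo] at ht; linarith)).ne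
  simp only [f]
  field_simp
  ring
end FM
namespace FM
lemma tendsto_int :
    Tendsto (fun N : ℕ => ∫ t in Set.Ioo (0:ℝ) 1, (1-(1-t)^N) * f t) atTop
      (𝓝 (∫ t in Set.Ioo (0:ℝ) 1, f t)) := by
  refine MeasureTheory.tendsto_integral_of_dominated_convergence
    (F := fun (N : ℕ) (t : ℝ) => (1-(1-t)^N) * f t) f ?_ integrable_f ?_ ?_
  · intro N
    exact (((measurable_const.sub ((measurable_const.sub measurable_id).pow_const N)).mul
      f_meas)).aestronglyMeasurable
  · intro N
    rw [ae_restrict_iff' measurableSet_Ioo]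
    filter_upwards with t ht
    obtain ⟨ht0, ht1⟩ := ht
    have hb : (0:ℝ) ≤ 1 - t := by linarith
    have hb1 : (1:ℝ) - t ≤ 1 := by linarith
    have h1 : 0 ≤ 1 - (1-t)^N := by
      have := pow_le_one₀ hb hb1 (n := N)
      linarith
    have h2 : 1 - (1-t)^N ≤ 1 := by
      have := pow_nonneg hb N
      linarith
    rw [norm_mul, Real.norm_eq_abs, Real.norm_eq_abs, abs_of_nonneg h1,
      abs_of_nonneg (f_nonneg ⟨ht0, ht1⟩)]
    calc (1 - (1-t)^N) * f t ≤ 1 * f t :=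
        mul_le_mul_of_nonneg_right h2 (f_nonneg ⟨ht0, ht1⟩)
      _ = f t := one_mul _
  · rw [ae_restrict_iff' measurableSet_Ioo]
    filter_upwards with t ht
    obtain ⟨ht0, ht1⟩ := ht
    have hp : Tendsto (fun N : ℕ => (1-t)^N) atTop (𝓝 0) :=
      tendsto_pow_atTop_nhds_zero_of_lt_one (by linarith) (by linarith)
    have := ((tendsto_const_nhds (x := (1:ℝ))).sub hp).mul (tendsto_const_nhds (x := f t))
    simpa using this

lemma gamma_eq_tsum_c :
    Real.eulerMascheroniConstant = ∑' n, c (n+1)/((n:ℝ)+1) := by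
  have h1 : Tendsto (fun N : ℕ => (harmonic N : ℝ) - Real.log ((N:ℝ)+1)) atTop
      (𝓝 Real.eulerMascheroniConstant) := Real.tendsto_harmonic_sub_log_add_one
  have h2 : (fun N : ℕ => (harmonic N : ℝ) - Real.log ((N:ℝ)+1))
      = fun N : ℕ => ∫ t in Set.Ioo (0:ℝ) 1, (1-(1-t)^N) * f t := funext Hlog
  rw [h2] at h1
  rw [tendsto_nhds_unique h1 tendsto_int, integral_f]
end FM



open Real Finset in
/-- Euler's constant `γ` equals the sum of the Fontana–Mascheroni series
`Σ_{n=1}^∞ |G_n|/n`, where the `G_n` are the Gregory coefficients, defined by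
`z/ln(1+z) = 1 + Σ_{n≥1} G_n zⁿ` for `|z| < 1`. -/

theorem stmt4 (G : ℕ → ℝ)
    (hG : ∀ z : ℝ, |z| < 1 → z ≠ 0 →
      z / Real.log (1 + z) = 1 + ∑' n : ℕ, G (n + 1) * z ^ (n + 1)) :
    Real.eulerMascheroniConstant = ∑' n : ℕ, |G (n + 1)| / ((n : ℝ) + 1) := by
  rw [FM.gamma_eq_tsum_c]
  apply tsum_congr
  intro n
  congr 1
  rw [FM.G_eq_g G hG n, FM.g_succ]
  rw [abs_mul, abs_pow, abs_neg, abs_one, one_pow, one_mul,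
    abs_of_pos (FM.c_pos n)]
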